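/- Let T be a tree with distinct vertices x and y, and let X be a tree with at least two vertices and a distinguished root u. Let T' be the tree obtained from the disjoint union of T and X by identifying u with x, and let T'' be the tree obtained from the disjoint union of T and X by identifying u with y. If f_T(x) > f_T(y), then F(T') > F(T''). -/

import Mathlib

open SimpleGraph

/-- A subtree of a graph `G` is a nonempty set of vertices inducing a connected subgraph. -/
def IsSubtree {V : Type} (G : SimpleGraph V) (s : Finset V) : Prop :=
  s.Nonempty ∧ (G.induce (s : Set V)).Connected

/-- `F(G)`: the number of subtrees of `G`. -/
noncomputable def numSubtrees {V : Type} (G : SimpleGraph V) : ℕ :=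
  {s : Finset V | IsSubtree G s}.ncard

/-- A leaf is a vertex of degree 1. -/
def IsLeaf {V : Type} (G : SimpleGraph V) (v : V) : Prop :=
  (G.neighborSet v).ncard = 1

/-- `F*(G)`: the number of subtrees of `G` containing at least one leaf of `G`. -/
noncomputable def numLeafSubtrees {V : Type} (G : SimpleGraph V) : ℕ :=
  {s : Finset V | IsSubtree G s ∧ ∃ v ∈ s, IsLeaf G v}.ncard

/-- `f_G(v)`: the number of subtrees of `G` containing the vertex `v`. -/
noncomputable def numSubtreesContaining {V : Type} (G : SimpleGraph V) (v : V) : ℕ :=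
  {s : Finset V | IsSubtree G s ∧ v ∈ s}.ncard

/-- `f*_G(v)`: the number of subtrees of `G` containing `v` and at least one leaf of `G`
different from `v`. -/
noncomputable def numLeafSubtreesContaining {V : Type} (G : SimpleGraph V) (v : V) : ℕ :=
  {s : Finset V | IsSubtree G s ∧ v ∈ s ∧ ∃ w ∈ s, w ≠ v ∧ IsLeaf G w}.ncard

/-- A finite set of edges of `G` that are pairwise non-incident. -/
def IsMatchingSet {V : Type} (G : SimpleGraph V) (M : Finset (Sym2 V)) : Prop :=
  (M : Set (Sym2 V)) ⊆ G.edgeSet ∧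
    ∀ e ∈ M, ∀ f ∈ M, e ≠ f → ∀ v : V, ¬(v ∈ e ∧ v ∈ f)

/-- The matching number: the maximum size of a set of pairwise non-incident edges. -/
noncomputable def matchingNumber {V : Type} (G : SimpleGraph V) : ℕ :=
  sSup {k | ∃ M : Finset (Sym2 V), IsMatchingSet G M ∧ M.card = k}

/-- `G` has a perfect matching: pairwise non-incident edges covering every vertex. -/
def HasPerfectMatching {V : Type} (G : SimpleGraph V) : Prop :=
  ∃ M : Finset (Sym2 V), IsMatchingSet G M ∧ ∀ v : V, ∃ e ∈ M, v ∈ e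

/-- A dominating set: every vertex outside `S` has a neighbour in `S`. -/
def IsDominating {V : Type} (G : SimpleGraph V) (S : Set V) : Prop :=
  ∀ v : V, v ∉ S → ∃ u ∈ S, G.Adj u v

/-- The domination number: the minimum size of a dominating set. -/
noncomputable def dominationNumber {V : Type} (G : SimpleGraph V) : ℕ :=
  sInf {k | ∃ S : Finset V, IsDominating G (S : Set V) ∧ S.card = k}

/-- The tree `A(n,q)`: a center vertex adjacent to `n - 2q + 1` leaves and to the
midpoints of `q - 1` pendant paths of length 2. -/
def treeA (n q : ℕ) : SimpleGraph (Unit ⊕ Fin (n - 2 * q + 1) ⊕ Fin (q - 1) ⊕ Fin (q - 1)) :=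
  SimpleGraph.fromRel fun x y =>
    match x, y with
    | Sum.inl _, Sum.inr (Sum.inl _) => True
    | Sum.inl _, Sum.inr (Sum.inr (Sum.inl _)) => True
    | Sum.inr (Sum.inr (Sum.inl i)), Sum.inr (Sum.inr (Sum.inr j)) => i = j
    | _, _ => False

/-- The corona `G ∘ K₁`: attach one new pendant vertex to each vertex of `G`. -/
def corona {V : Type} (G : SimpleGraph V) : SimpleGraph (V ⊕ V) :=
  SimpleGraph.fromRel fun x y =>
    match x, y with
    | Sum.inl a, Sum.inl b => G.Adj a b
    | Sum.inl a, Sum.inr b => a = b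
    | _, _ => False

/-- `P₄(1^a, 1^b)`: a path on 4 vertices with `a` pendant vertices attached to one
endvertex and `b` pendant vertices attached to the other endvertex. -/
def treeP4 (a b : ℕ) : SimpleGraph (Fin 4 ⊕ Fin a ⊕ Fin b) :=
  SimpleGraph.fromRel fun x y =>
    match x, y with
    | Sum.inl i, Sum.inl j => (j : ℕ) = (i : ℕ) + 1
    | Sum.inl i, Sum.inr (Sum.inl _) => i = 0
    | Sum.inl i, Sum.inr (Sum.inr _) => i = 3
    | _, _ => False

/-- The broom `T_{n,Δ}`: a path on `n - Δ + 1` vertices with `Δ - 1` pendant vertices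
attached to one endvertex. -/
def broom (n Δ : ℕ) : SimpleGraph (Fin (n - Δ + 1) ⊕ Fin (Δ - 1)) :=
  SimpleGraph.fromRel fun x y =>
    match x, y with
    | Sum.inl i, Sum.inl j => (j : ℕ) = (i : ℕ) + 1
    | Sum.inl i, Sum.inr _ => (i : ℕ) = 0
    | _, _ => False

/-- `T'_{n,Δ}`: a path on `n - 2Δ + 3` vertices with `Δ - 2` pendant paths of length 2
and one pendant edge attached to one endvertex of the path. -/
def treeT' (n Δ : ℕ) :
    SimpleGraph (Fin (n - 2 * Δ + 3) ⊕ Fin (Δ - 2) ⊕ Fin (Δ - 2) ⊕ Unit) :=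
  SimpleGraph.fromRel fun x y =>
    match x, y with
    | Sum.inl i, Sum.inl j => (j : ℕ) = (i : ℕ) + 1
    | Sum.inl i, Sum.inr (Sum.inl _) => (i : ℕ) = 0
    | Sum.inr (Sum.inl i), Sum.inr (Sum.inr (Sum.inl j)) => i = j
    | Sum.inl i, Sum.inr (Sum.inr (Sum.inr _)) => (i : ℕ) = 0
    | _, _ => False

/-- The spider with `i` legs of length `l` and `j` legs of length `L`. -/
def spider (i l j L : ℕ) : SimpleGraph (Unit ⊕ (Fin i × Fin l) ⊕ (Fin j × Fin L)) :=
  SimpleGraph.fromRel fun x y =>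
    match x, y with
    | Sum.inl _, Sum.inr (Sum.inl (_, t)) => (t : ℕ) = 0
    | Sum.inl _, Sum.inr (Sum.inr (_, t)) => (t : ℕ) = 0
    | Sum.inr (Sum.inl (a, s)), Sum.inr (Sum.inl (b, t)) => a = b ∧ (t : ℕ) = (s : ℕ) + 1
    | Sum.inr (Sum.inr (a, s)), Sum.inr (Sum.inr (b, t)) => a = b ∧ (t : ℕ) = (s : ℕ) + 1
    | _, _ => False

/-- `Ť_{n,k}^d`: a path `v_1 v_2 … v_{d+1}` on `d + 1` vertices with `n - d - 1`
pendant vertices attached to the vertex `v_k` (`1 ≤ k ≤ d + 1`). -/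
def treeHat (n d k : ℕ) : SimpleGraph (Fin (d + 1) ⊕ Fin (n - d - 1)) :=
  SimpleGraph.fromRel fun x y =>
    match x, y with
    | Sum.inl i, Sum.inl j => (j : ℕ) = (i : ℕ) + 1
    | Sum.inl i, Sum.inr _ => (i : ℕ) + 1 = k
    | _, _ => False

/-- The tree obtained from the disjoint union of `T` and a rooted tree `X` by
identifying the root `u` of `X` with the vertex `x` of `T`. -/
def graft {A B : Type} (T : SimpleGraph A) (X : SimpleGraph B) (x : A) (u : B) :
    SimpleGraph (A ⊕ {b : B // b ≠ u}) :=
  SimpleGraph.fromRel fun p q =>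
    match p, q with
    | Sum.inl a, Sum.inl b => T.Adj a b
    | Sum.inr a, Sum.inr b => X.Adj (a : B) (b : B)
    | Sum.inl a, Sum.inr b => a = x ∧ X.Adj u (b : B)
    | Sum.inr _, Sum.inl _ => False

/-- The tree obtained from the disjoint union of `G` and `H` by adding the edge `uv`. -/
def joinByEdge {A B : Type} (G : SimpleGraph A) (H : SimpleGraph B) (u : A) (v : B) :
    SimpleGraph (A ⊕ B) :=
  SimpleGraph.fromRel fun p q =>
    match p, q with
    | Sum.inl a, Sum.inl b => G.Adj a b
    | Sum.inr a, Sum.inr b => H.Adj a b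
    | Sum.inl a, Sum.inr b => a = u ∧ b = v
    | Sum.inr _, Sum.inl _ => False

/-- The graph obtained from `G` by attaching one new pendant vertex to `x`. -/
def attachPendant {A : Type} (G : SimpleGraph A) (x : A) : SimpleGraph (A ⊕ Unit) :=
  SimpleGraph.fromRel fun p q =>
    match p, q with
    | Sum.inl a, Sum.inl b => G.Adj a b
    | Sum.inl a, Sum.inr _ => a = x
    | _, _ => False

open scoped Classical

/-- Projection lemma: a map that sends each edge to an equality or an edge
preserves reachability. -/
lemma reach_map {V W : Type*} {G : SimpleGraph V} {H : SimpleGraph W} (f : V → W)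
    (hf : ∀ a b, G.Adj a b → f a = f b ∨ H.Adj (f a) (f b)) {v w : V}
    (h : G.Reachable v w) : H.Reachable (f v) (f w) := by
  obtain ⟨p⟩ := h
  induction p with
  | nil => exact SimpleGraph.Reachable.refl _
  | cons h' p ih =>
    rcases hf _ _ h' with h1 | h1
    · rw [h1]; exact ih
    · exact h1.reachable.trans ih

lemma finite_finset {α : Type*} [Finite α] : Finite (Finset α) :=
  Finite.of_injective (fun s : Finset α => (s : Set α)) Finset.coe_injective

section Graft

variable {A B : Type} (T : SimpleGraph A) (X : SimpleGraph B) (u : B)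

local notation "B'" => {b : B // b ≠ u}

lemma graft_adj_inl_inl {z : A} {a b : A} :
    (graft T X z u).Adj (Sum.inl a) (Sum.inl b) ↔ T.Adj a b := by
  rw [graft, SimpleGraph.fromRel_adj]
  constructor
  · rintro ⟨-, h | h⟩
    · exact h
    · exact h.symm
  · intro h
    exact ⟨fun he => h.ne (Sum.inl.inj he), Or.inl h⟩

lemma graft_adj_inr_inr {z : A} {a b : B'} :
    (graft T X z u).Adj (Sum.inr a) (Sum.inr b) ↔ X.Adj (a : B) (b : B) := by
  rw [graft, SimpleGraph.fromRel_adj]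
  constructor
  · rintro ⟨-, h | h⟩
    · exact h
    · exact h.symm
  · intro h
    exact ⟨fun he => h.ne (congrArg Subtype.val (Sum.inr.inj he)), Or.inl h⟩

lemma graft_adj_inl_inr {z : A} {a : A} {b : B'} :
    (graft T X z u).Adj (Sum.inl a) (Sum.inr b) ↔ a = z ∧ X.Adj u (b : B) := by
  rw [graft, SimpleGraph.fromRel_adj]
  constructor
  · rintro ⟨-, h | h⟩
    · exact h
    · exact h.elim
  · intro h
    exact ⟨fun he => by simp at he, Or.inl h⟩

lemma graft_adj_inr_inl {z : A} {a : A} {b : B'} :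
    (graft T X z u).Adj (Sum.inr b) (Sum.inl a) ↔ a = z ∧ X.Adj u (b : B) := by
  rw [SimpleGraph.adj_comm]; exact graft_adj_inl_inr T X u

end Graft
section Graft2

variable {A B : Type} (T : SimpleGraph A) (X : SimpleGraph B) (u : B)

local notation "B'" => {b : B // b ≠ u}

lemma inl_z_mem_of_walk {z : A} {S : Finset (A ⊕ B')}
    {v w : ↥((S : Set (A ⊕ B')))}
    (p : ((graft T X z u).induce (S : Set (A ⊕ B'))).Walk v w)
    (hv : ∃ a, v.val = Sum.inl a) (hw : ∃ b, w.val = Sum.inr b) :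
    Sum.inl z ∈ S := by
  revert hv hw
  induction p with
  | nil =>
    intro hv hw
    obtain ⟨a, ha⟩ := hv; obtain ⟨b, hb⟩ := hw
    rw [ha] at hb; exact absurd hb (by simp)
  | @cons v v' w h p ih =>
    intro hv hw
    obtain ⟨a, ha⟩ := hv
    obtain ⟨val, hval⟩ := v'
    cases val with
    | inl a' => exact ih ⟨a', rfl⟩ hw
    | inr b' =>
      have h' : (graft T X z u).Adj v.val (Sum.inr b') := h
      rw [ha] at h'
      have h2 := (graft_adj_inl_inr T X u).mp h'
      have : Sum.inl a ∈ S := by rw [← ha]; exact v.property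
      rwa [h2.1] at this

lemma subtree_disjSum_empty {z : A} {s : Finset A} :
    IsSubtree (graft T X z u) (s.disjSum (∅ : Finset B')) ↔ IsSubtree T s := by
  constructor
  · rintro ⟨hne, hconn⟩
    obtain ⟨v, hv⟩ := hne
    obtain ⟨a0, ha0⟩ : ∃ a, a ∈ s := by
      cases v with
      | inl a => exact ⟨a, by simpa using hv⟩
      | inr b => simp at hv
    refine ⟨⟨a0, ha0⟩, ?_⟩
    haveI : Nonempty ↥((s : Set A)) := ⟨⟨a0, ha0⟩⟩
    constructor
    intro ⟨a, ha⟩ ⟨b, hb⟩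
    have hr := hconn.preconnected ⟨Sum.inl a, by simpa using ha⟩ ⟨Sum.inl b, by simpa using hb⟩
    set f : ↥((s.disjSum (∅ : Finset B') : Finset (A ⊕ B')) : Set (A ⊕ B')) → ↥((s : Set A)) :=
      fun v => ⟨Sum.elim id (fun _ => a0) v.val, by
        obtain ⟨val, hval⟩ := v
        cases val with
        | inl c => simpa using hval
        | inr b => simp at hval⟩ with hf_def
    have hf : ∀ v w, (((graft T X z u).induce _).Adj v w) →
        f v = f w ∨ (T.induce (s : Set A)).Adj (f v) (f w) := by
      intro v w hadj
      obtain ⟨vv, hvv⟩ := v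
      obtain ⟨ww, hww⟩ := w
      cases vv with
      | inl c =>
        cases ww with
        | inl d =>
          refine Or.inr ?_
          have : (graft T X z u).Adj (Sum.inl c) (Sum.inl d) := hadj
          exact (graft_adj_inl_inl T X u).mp this
        | inr e => simp at hww
      | inr e => simp at hvv
    have := reach_map f hf hr
    exact this
  · rintro ⟨hne, hconn⟩
    obtain ⟨a0, ha0⟩ := hne
    refine ⟨⟨Sum.inl a0, by simpa using ha0⟩, ?_⟩
    haveI : Nonempty ↥((s.disjSum (∅ : Finset B') : Finset (A ⊕ B')) : Set (A ⊕ B')) :=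
      ⟨⟨Sum.inl a0, by simpa using ha0⟩⟩
    constructor
    intro v w
    obtain ⟨vv, hvv⟩ := v
    obtain ⟨ww, hww⟩ := w
    cases vv with
    | inr e => simp at hvv
    | inl a =>
      cases ww with
      | inr e => simp at hww
      | inl b =>
        have ha : a ∈ s := by simpa using hvv
        have hb : b ∈ s := by simpa using hww
        have hr := hconn.preconnected ⟨a, ha⟩ ⟨b, hb⟩
        set g : ↥((s : Set A)) →
            ↥((s.disjSum (∅ : Finset B') : Finset (A ⊕ B')) : Set (A ⊕ B')) :=
          fun a => ⟨Sum.inl a.val, by simpa using a.property⟩ with hg_def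
        have hg : ∀ v w, ((T.induce (s : Set A)).Adj v w) →
            g v = g w ∨ (((graft T X z u).induce _).Adj (g v) (g w)) := by
          intro v w hadj
          exact Or.inr ((graft_adj_inl_inl T X u (z := z)).mpr hadj)
        exact reach_map g hg hr

end Graft2
section Graft3

variable {A B : Type} (T : SimpleGraph A) (X : SimpleGraph B) (u : B)

local notation "B'" => {b : B // b ≠ u}

lemma subtree_empty_disjSum_mono {z z' : A} {t : Finset B'}
    (h : IsSubtree (graft T X z u) ((∅ : Finset A).disjSum t)) :
    IsSubtree (graft T X z' u) ((∅ : Finset A).disjSum t) := by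
  obtain ⟨hne, hconn⟩ := h
  obtain ⟨v0, hv0⟩ := hne
  refine ⟨⟨v0, hv0⟩, ?_⟩
  haveI : Nonempty ↥(((∅ : Finset A).disjSum t : Finset (A ⊕ B')) : Set (A ⊕ B')) :=
    ⟨⟨v0, hv0⟩⟩
  constructor
  intro v w
  have hr := hconn.preconnected v w
  have hf : ∀ a b, (((graft T X z u).induce _).Adj a b) →
      (id a = id b) ∨ (((graft T X z' u).induce
        (((∅ : Finset A).disjSum t : Finset (A ⊕ B')) : Set (A ⊕ B'))).Adj (id a) (id b)) := by
    intro a b hadj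
    obtain ⟨va, hva⟩ := a
    obtain ⟨vb, hvb⟩ := b
    cases va with
    | inl c => simp at hva
    | inr c =>
      cases vb with
      | inl d => simp at hvb
      | inr d =>
        refine Or.inr ?_
        have h1 : (graft T X z u).Adj (Sum.inr c) (Sum.inr d) := hadj
        exact (graft_adj_inr_inr T X u (z := z')).mpr ((graft_adj_inr_inr T X u).mp h1)
  exact reach_map id hf hr

lemma subtree_mixed_iff {z : A} {s : Finset A} {t : Finset B'} (ht : t.Nonempty) :
    (IsSubtree (graft T X z u) (s.disjSum t) ∧ s.Nonempty) ↔
      ((IsSubtree T s ∧ z ∈ s) ∧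
        IsSubtree X (insert u (t.image Subtype.val))) := by
  constructor
  · rintro ⟨⟨hne, hconn⟩, ⟨a1, ha1⟩⟩
    obtain ⟨b1, hb1⟩ := ht
    -- step (a): the joint vertex is in the set
    have hz : Sum.inl z ∈ s.disjSum t := by
      have hr := hconn.preconnected ⟨Sum.inl a1, by simpa using ha1⟩
        ⟨Sum.inr b1, by simpa using hb1⟩
      obtain ⟨p⟩ := hr
      exact inl_z_mem_of_walk T X u p ⟨a1, rfl⟩ ⟨b1, rfl⟩
    have hzs : z ∈ s := by simpa using hz
    refine ⟨⟨⟨⟨a1, ha1⟩, ?_⟩, hzs⟩, ⟨⟨u, Finset.mem_insert_self _ _⟩, ?_⟩⟩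
    · -- T-side connectivity
      haveI : Nonempty ↥((s : Set A)) := ⟨⟨a1, ha1⟩⟩
      constructor
      intro ⟨a, ha⟩ ⟨b, hb⟩
      have hr := hconn.preconnected ⟨Sum.inl a, by simpa using ha⟩ ⟨Sum.inl b, by simpa using hb⟩
      set f : ↥((s.disjSum t : Finset (A ⊕ B')) : Set (A ⊕ B')) → ↥((s : Set A)) :=
        fun v => ⟨Sum.elim id (fun _ => z) v.val, by
          obtain ⟨val, hval⟩ := v
          cases val with
          | inl c => simpa using hval
          | inr c => simpa using hzs⟩ with hf_def
      have hf : ∀ v w, (((graft T X z u).induce _).Adj v w) →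
          f v = f w ∨ (T.induce (s : Set A)).Adj (f v) (f w) := by
        intro v w hadj
        obtain ⟨vv, hvv⟩ := v
        obtain ⟨ww, hww⟩ := w
        cases vv with
        | inl c =>
          cases ww with
          | inl d =>
            have h1 : (graft T X z u).Adj (Sum.inl c) (Sum.inl d) := hadj
            exact Or.inr ((graft_adj_inl_inl T X u).mp h1)
          | inr d =>
            have h1 : (graft T X z u).Adj (Sum.inl c) (Sum.inr d) := hadj
            exact Or.inl (Subtype.ext ((graft_adj_inl_inr T X u).mp h1).1)
        | inr c =>
          cases ww with
          | inl d =>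
            have h1 : (graft T X z u).Adj (Sum.inr c) (Sum.inl d) := hadj
            exact Or.inl (Subtype.ext ((graft_adj_inr_inl T X u).mp h1).1.symm)
          | inr d => exact Or.inl rfl
      exact reach_map f hf hr
    · -- X-side connectivity
      haveI : Nonempty ↥((insert u (t.image Subtype.val) : Finset B) : Set B) :=
        ⟨⟨u, by simp⟩⟩
      constructor
      intro ⟨p1, hp1⟩ ⟨p2, hp2⟩
      set f : ↥((s.disjSum t : Finset (A ⊕ B')) : Set (A ⊕ B')) →
          ↥((insert u (t.image Subtype.val) : Finset B) : Set B) :=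
        fun v => ⟨Sum.elim (fun _ => u) Subtype.val v.val, by
          obtain ⟨val, hval⟩ := v
          cases val with
          | inl c => simp
          | inr c =>
            have hc : c ∈ t := by simpa using hval
            simp only [Finset.mem_coe, Finset.mem_insert, Finset.mem_image, Sum.elim_inr]
            exact Or.inr ⟨c, hc, rfl⟩⟩ with hf_def
      have hf : ∀ v w, (((graft T X z u).induce _).Adj v w) →
          f v = f w ∨ ((X.induce _).Adj (f v) (f w)) := by
        intro v w hadj
        obtain ⟨vv, hvv⟩ := v
        obtain ⟨ww, hww⟩ := w
        cases vv with
        | inl c =>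
          cases ww with
          | inl d => exact Or.inl rfl
          | inr d =>
            have h1 : (graft T X z u).Adj (Sum.inl c) (Sum.inr d) := hadj
            exact Or.inr ((graft_adj_inl_inr T X u).mp h1).2
        | inr c =>
          cases ww with
          | inl d =>
            have h1 : (graft T X z u).Adj (Sum.inr c) (Sum.inl d) := hadj
            exact Or.inr ((graft_adj_inr_inl T X u).mp h1).2.symm
          | inr d =>
            have h1 : (graft T X z u).Adj (Sum.inr c) (Sum.inr d) := hadj
            exact Or.inr ((graft_adj_inr_inr T X u).mp h1)
      have key : ∀ (q : B) (hq : q ∈ (insert u (t.image Subtype.val) : Finset B)),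
          ∃ v, f v = ⟨q, Finset.mem_coe.mpr hq⟩ := by
        intro q hq
        rcases Finset.mem_insert.mp hq with hqu | hqt
        · exact ⟨⟨Sum.inl z, by simpa using hz⟩, Subtype.ext hqu.symm⟩
        · obtain ⟨c, hc, hcv⟩ := Finset.mem_image.mp hqt
          exact ⟨⟨Sum.inr c, by simpa using hc⟩, Subtype.ext hcv⟩
      obtain ⟨v1, hv1⟩ := key p1 hp1
      obtain ⟨v2, hv2⟩ := key p2 hp2
      rw [← hv1, ← hv2]
      exact reach_map f hf (hconn.preconnected v1 v2)
  · rintro ⟨⟨⟨hsne, hsconn⟩, hzs⟩, ⟨-, hXconn⟩⟩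
    refine ⟨⟨⟨Sum.inl z, by simpa using hzs⟩, ?_⟩, ⟨z, hzs⟩⟩
    haveI : Nonempty ↥((s.disjSum t : Finset (A ⊕ B')) : Set (A ⊕ B')) :=
      ⟨⟨Sum.inl z, by simpa using hzs⟩⟩
    constructor
    have hbase : ∀ v : ↥((s.disjSum t : Finset (A ⊕ B')) : Set (A ⊕ B')),
        (((graft T X z u).induce _).Reachable v ⟨Sum.inl z, by simpa using hzs⟩) := by
      intro v
      obtain ⟨vv, hvv⟩ := v
      cases vv with
      | inl a =>
        have ha : a ∈ s := by simpa using hvv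
        set g : ↥((s : Set A)) → ↥((s.disjSum t : Finset (A ⊕ B')) : Set (A ⊕ B')) :=
          fun a => ⟨Sum.inl a.val, by simpa using a.property⟩ with hg_def
        have hg : ∀ v w, ((T.induce (s : Set A)).Adj v w) →
            g v = g w ∨ (((graft T X z u).induce _).Adj (g v) (g w)) := by
          intro v w hadj
          exact Or.inr ((graft_adj_inl_inl T X u (z := z)).mpr hadj)
        exact reach_map g hg (hsconn.preconnected ⟨a, ha⟩ ⟨z, hzs⟩)
      | inr c =>
        have hc : c ∈ t := by simpa using hvv
        set g : ↥((insert u (t.image Subtype.val) : Finset B) : Set B) →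
            ↥((s.disjSum t : Finset (A ⊕ B')) : Set (A ⊕ B')) :=
          fun q => if h : q.val = u then ⟨Sum.inl z, by simpa using hzs⟩
            else ⟨Sum.inr ⟨q.val, h⟩, by
              have hq : q.val ∈ (insert u (t.image Subtype.val) : Finset B) :=
                Finset.mem_coe.mp q.property
              rcases Finset.mem_insert.mp hq with hqu | hqt
              · exact absurd hqu h
              · obtain ⟨c', hc', hcv⟩ := Finset.mem_image.mp hqt
                have hce : (⟨q.val, h⟩ : B') = c' := Subtype.ext hcv.symm
                rw [hce]
                simpa using hc'⟩ with hg_def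
        have hg : ∀ v w, ((X.induce ((insert u (t.image Subtype.val) : Finset B) :
            Set B)).Adj v w) →
            g v = g w ∨ (((graft T X z u).induce _).Adj (g v) (g w)) := by
          intro q1 q2 hadj
          have hXadj : X.Adj q1.val q2.val := hadj
          by_cases h1 : q1.val = u
          · by_cases h2 : q2.val = u
            · rw [h1, h2] at hXadj
              exact (X.loopless.irrefl u hXadj).elim
            · refine Or.inr ?_
              simp only [hg_def, dif_pos h1, dif_neg h2]
              refine (graft_adj_inl_inr T X u).mpr ⟨rfl, ?_⟩
              have := hXadj; rw [h1] at this; exact this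
          · by_cases h2 : q2.val = u
            · refine Or.inr ?_
              simp only [hg_def, dif_neg h1, dif_pos h2]
              refine (graft_adj_inr_inl T X u).mpr ⟨rfl, ?_⟩
              have := hXadj.symm; rw [h2] at this; exact this
            · refine Or.inr ?_
              simp only [hg_def, dif_neg h1, dif_neg h2]
              exact (graft_adj_inr_inr T X u (z := z)).mpr hXadj
        have hq1 : (c : B) ∈ (insert u (t.image Subtype.val) : Finset B) := by
          simp only [Finset.mem_insert, Finset.mem_image]
          exact Or.inr ⟨c, hc, rfl⟩
        have hq2 : u ∈ (insert u (t.image Subtype.val) : Finset B) :=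
          Finset.mem_insert_self _ _
        have hr := hXconn.preconnected ⟨(c : B), Finset.mem_coe.mpr hq1⟩
          ⟨u, Finset.mem_coe.mpr hq2⟩
        have := reach_map g hg hr
        have e1 : g ⟨(c : B), Finset.mem_coe.mpr hq1⟩ = ⟨Sum.inr c, hvv⟩ := by
          simp only [hg_def]
          rw [dif_neg c.property]
        have e2 : g ⟨u, Finset.mem_coe.mpr hq2⟩ = ⟨Sum.inl z, by simpa using hzs⟩ := by
          simp [hg_def]
        rwa [e1, e2] at this
    intro v w
    exact (hbase v).trans (hbase w).symm

end Graft3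
section Graft4

variable {A B : Type} (T : SimpleGraph A) (X : SimpleGraph B) (u : B)

local notation "B'" => {b : B // b ≠ u}

lemma eq_disjSum_of_all_inr {S : Finset (A ⊕ B')} (h : ∀ v ∈ S, ∃ b, v = Sum.inr b) :
    S = (∅ : Finset A).disjSum S.toRight := by
  ext v
  cases v with
  | inl a =>
    simp only [Finset.inl_mem_disjSum, Finset.notMem_empty, iff_false]
    intro ha
    obtain ⟨b, hb⟩ := h _ ha
    exact absurd hb (by simp)
  | inr b => simp [Finset.mem_toRight]

lemma eq_disjSum_of_all_inl {S : Finset (A ⊕ B')} (h : ∀ v ∈ S, ∃ a, v = Sum.inl a) :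
    S = S.toLeft.disjSum (∅ : Finset B') := by
  ext v
  cases v with
  | inr b =>
    simp only [Finset.inr_mem_disjSum, Finset.notMem_empty, iff_false]
    intro hb
    obtain ⟨a, ha⟩ := h _ hb
    exact absurd ha (by simp)
  | inl a => simp [Finset.mem_toLeft]

lemma count_formula [Fintype A] [Fintype B] (z : A) :
    numSubtrees (graft T X z u) =
      numSubtrees T +
        ({S : Finset (A ⊕ B') | IsSubtree (graft T X z u) S ∧
            ∀ v ∈ S, ∃ b, v = Sum.inr b}).ncard +
        (numSubtreesContaining T z) *
          ({p : Finset B' | p.Nonempty ∧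
              IsSubtree X (insert u (p.image Subtype.val))}).ncard := by
  haveI : Finite (Finset (A ⊕ B')) := finite_finset
  haveI : Finite (Finset A) := finite_finset
  haveI : Finite (Finset B') := finite_finset
  set G := graft T X z u with hG
  set L := {S : Finset (A ⊕ B') | IsSubtree G S ∧ ∀ v ∈ S, ∃ a, v = Sum.inl a} with hL
  set R := {S : Finset (A ⊕ B') | IsSubtree G S ∧ ∀ v ∈ S, ∃ b, v = Sum.inr b} with hR
  set M := {S : Finset (A ⊕ B') | IsSubtree G S ∧
      (∃ a, Sum.inl a ∈ S) ∧ (∃ b, Sum.inr b ∈ S)} with hM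
  set P := {s : Finset A | IsSubtree T s ∧ z ∈ s} with hP
  set Q := {p : Finset B' | p.Nonempty ∧
      IsSubtree X (insert u (p.image Subtype.val))} with hQ
  have hsplit : {S : Finset (A ⊕ B') | IsSubtree G S} = (L ∪ R) ∪ M := by
    ext S
    simp only [Set.mem_setOf_eq, Set.mem_union, hL, hR, hM]
    constructor
    · intro hS
      by_cases hl : ∃ a, Sum.inl a ∈ S
      · by_cases hr : ∃ b, Sum.inr b ∈ S
        · exact Or.inr ⟨hS, hl, hr⟩
        · refine Or.inl (Or.inl ⟨hS, ?_⟩)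
          intro v hv
          cases v with
          | inl a => exact ⟨a, rfl⟩
          | inr b => exact absurd ⟨b, hv⟩ hr
      · by_cases hr : ∃ b, Sum.inr b ∈ S
        · refine Or.inl (Or.inr ⟨hS, ?_⟩)
          intro v hv
          cases v with
          | inr b => exact ⟨b, rfl⟩
          | inl a => exact absurd ⟨a, hv⟩ hl
        · obtain ⟨v, hv⟩ := hS.1
          cases v with
          | inl a => exact absurd ⟨a, hv⟩ hl
          | inr b => exact absurd ⟨b, hv⟩ hr
    · rintro ((h | h) | h) <;> exact h.1
  have hdisjLR : Disjoint L R := by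
    rw [Set.disjoint_left]
    rintro S ⟨hS, hall⟩ ⟨-, hall'⟩
    obtain ⟨v, hv⟩ := hS.1
    obtain ⟨a, ha⟩ := hall v hv
    obtain ⟨b, hb⟩ := hall' v hv
    rw [ha] at hb
    exact absurd hb (by simp)
  have hdisjM : Disjoint (L ∪ R) M := by
    rw [Set.disjoint_left]
    rintro S (⟨-, hall⟩ | ⟨-, hall⟩) ⟨-, ⟨a, hain⟩, ⟨b, hbin⟩⟩
    · obtain ⟨a', ha'⟩ := hall _ hbin
      exact absurd ha' (by simp)
    · obtain ⟨b', hb'⟩ := hall _ hain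
      exact absurd hb' (by simp)
  have hLcard : L.ncard = numSubtrees T := by
    have himg : L = (fun s : Finset A => s.disjSum (∅ : Finset B')) ''
        {s : Finset A | IsSubtree T s} := by
      ext S
      simp only [hL, Set.mem_setOf_eq, Set.mem_image]
      constructor
      · rintro ⟨hS, hall⟩
        refine ⟨S.toLeft, ?_, (eq_disjSum_of_all_inl (u := u) hall).symm⟩
        rw [eq_disjSum_of_all_inl (u := u) hall] at hS
        exact (subtree_disjSum_empty T X u).mp hS
      · rintro ⟨s, hs, rfl⟩
        refine ⟨(subtree_disjSum_empty T X u).mpr hs, ?_⟩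
        intro v hv
        cases v with
        | inl a => exact ⟨a, rfl⟩
        | inr b => exact absurd hv (by simp)
    rw [himg, Set.ncard_image_of_injective _ ?hinj]
    · rfl
    case hinj =>
      intro s s' hss
      have := congrArg Finset.toLeft hss
      simpa only [Finset.toLeft_disjSum] using this
  have hMcard : M.ncard = (numSubtreesContaining T z) * Q.ncard := by
    have himg : M = (fun p : Finset A × Finset B' => p.1.disjSum p.2) '' (P ×ˢ Q) := by
      ext S
      simp only [hM, Set.mem_setOf_eq, Set.mem_image, Set.mem_prod, hP, hQ]
      constructor
      · rintro ⟨hS, ⟨a, hain⟩, ⟨b, hbin⟩⟩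
        have ht : S.toRight.Nonempty := ⟨b, Finset.mem_toRight.mpr hbin⟩
        have hSeq : S = S.toLeft.disjSum S.toRight := Finset.toLeft_disjSum_toRight.symm
        have hsne : S.toLeft.Nonempty := ⟨a, Finset.mem_toLeft.mpr hain⟩
        rw [hSeq] at hS
        obtain ⟨⟨hTs, hzs⟩, hXs⟩ := (subtree_mixed_iff T X u ht).mp ⟨hS, hsne⟩
        exact ⟨(S.toLeft, S.toRight), ⟨⟨hTs, hzs⟩, ht, hXs⟩, hSeq.symm⟩
      · rintro ⟨⟨s, t⟩, ⟨⟨hTs, hzs⟩, htne, hXs⟩, rfl⟩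
        obtain ⟨hsub, -⟩ := (subtree_mixed_iff T X u htne).mpr ⟨⟨hTs, hzs⟩, hXs⟩
        refine ⟨hsub, ⟨z, by simpa using hzs⟩, ?_⟩
        obtain ⟨b, hb⟩ := htne
        exact ⟨b, by simpa using hb⟩
    have hinj : Function.Injective (fun p : Finset A × Finset B' => p.1.disjSum p.2) := by
      intro p q hpq
      have h1 := congrArg Finset.toLeft hpq
      have h2 := congrArg Finset.toRight hpq
      simp only [Finset.toLeft_disjSum, Finset.toRight_disjSum] at h1 h2
      exact Prod.ext h1 h2
    rw [himg, Set.ncard_image_of_injective _ hinj]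
    have : (P ×ˢ Q).ncard = P.ncard * Q.ncard := by
      rw [← Nat.card_coe_set_eq, ← Nat.card_coe_set_eq, ← Nat.card_coe_set_eq,
        Nat.card_congr (Equiv.Set.prod _ _), Nat.card_prod]
    rw [this]
    rfl
  rw [numSubtrees, hsplit, Set.ncard_union_eq hdisjM (Set.toFinite _) (Set.toFinite _),
    Set.ncard_union_eq hdisjLR (Set.toFinite _) (Set.toFinite _), hLcard, hMcard]

end Graft4
/-- Attaching a rooted tree `X` (with at least two vertices) at a vertex
`x` of `T` with `f_T(x) > f_T(y)` produces more subtrees than attaching it at `y`. -/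
theorem numSubtrees_graft_lt {A B : Type} [Fintype A] [Fintype B]
    (T : SimpleGraph A) (X : SimpleGraph B) (hT : T.IsTree) (hX : X.IsTree)
    (x y : A) (hxy : x ≠ y) (u : B) (hB : 2 ≤ Fintype.card B)
    (h : numSubtreesContaining T y < numSubtreesContaining T x) :
    numSubtrees (graft T X y u) < numSubtrees (graft T X x u) := by
  have hcf_x := count_formula T X u x
  have hcf_y := count_formula T X u y
  have hReq : {S : Finset (A ⊕ {b : B // b ≠ u}) | IsSubtree (graft T X y u) S ∧
      ∀ v ∈ S, ∃ b, v = Sum.inr b} =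
      {S : Finset (A ⊕ {b : B // b ≠ u}) | IsSubtree (graft T X x u) S ∧
      ∀ v ∈ S, ∃ b, v = Sum.inr b} := by
    ext S
    simp only [Set.mem_setOf_eq]
    constructor
    · rintro ⟨hS, hall⟩
      refine ⟨?_, hall⟩
      rw [eq_disjSum_of_all_inr (u := u) hall] at hS ⊢
      exact subtree_empty_disjSum_mono T X u hS
    · rintro ⟨hS, hall⟩
      refine ⟨?_, hall⟩
      rw [eq_disjSum_of_all_inr (u := u) hall] at hS ⊢
      exact subtree_empty_disjSum_mono T X u hS
  have hQpos : 0 < ({p : Finset {b : B // b ≠ u} | p.Nonempty ∧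
      IsSubtree X (insert u (p.image Subtype.val))}).ncard := by
    haveI : Finite (Finset {b : B // b ≠ u}) := finite_finset
    rw [Set.ncard_pos (Set.toFinite _)]
    obtain ⟨v, hv⟩ := Fintype.exists_ne_of_one_lt_card (by omega) u
    obtain ⟨w, hw⟩ : ∃ w, X.Adj u w := by
      obtain ⟨p⟩ := hX.isConnected.preconnected u v
      cases p with
      | nil => exact absurd rfl hv
      | cons hadj q => exact ⟨_, hadj⟩
    refine ⟨{⟨w, hw.ne'⟩}, ⟨⟨w, hw.ne'⟩, by simp⟩, ?_⟩
    have himg : ({⟨w, hw.ne'⟩} : Finset {b : B // b ≠ u}).image Subtype.val = {w} := by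
      simp
    rw [himg]
    refine ⟨⟨u, Finset.mem_insert_self _ _⟩, ?_⟩
    haveI : Nonempty ↥((insert u ({w} : Finset B) : Finset B) : Set B) := ⟨⟨u, by simp⟩⟩
    constructor
    intro p q
    obtain ⟨pv, hp⟩ := p
    obtain ⟨qv, hq⟩ := q
    have hp' : pv = u ∨ pv = w := by simpa using hp
    have hq' : qv = u ∨ qv = w := by simpa using hq
    rcases hp' with rfl | rfl <;> rcases hq' with rfl | rfl
    · exact SimpleGraph.Reachable.refl _
    · exact SimpleGraph.Adj.reachable hw
    · exact SimpleGraph.Adj.reachable hw.symm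
    · exact SimpleGraph.Reachable.refl _
  rw [hcf_x, hcf_y, hReq]
  exact Nat.add_lt_add_left (Nat.mul_lt_mul_of_pos_right h hQpos) _
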